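/- Let Γ be finite, → the BPP step relation on ℕ^Γ, F upward-closed with complement F̄, and γ ∈ ℕ^Γ. The Karp–Miller-style search tree—exploring paths α_0 → α_1 → ... through F̄ and pruning any node α_k for which some ancestor α_j (j < k) satisfies α_j ≤ α_k—is finite, and it contains a node α_k with α_k ≤ γ if and only if there exists a path from α_0 through F̄ to some configuration ≤ γ. -/

import Mathlib

variable {Γ : Type*} [Fintype Γ] [DecidableEq Γ]

/-- Applying rule `r = (X, β)`: replace one `X`-process by `β`. -/
def applyRule (α : Γ → ℕ) (r : Γ × (Γ → ℕ)) : Γ → ℕ :=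
  fun Y => α Y - (if Y = r.1 then 1 else 0) + r.2 Y

/-- One step of the BPP with rule set `rules`. -/
def Step (rules : Finset (Γ × (Γ → ℕ))) (α γ : Γ → ℕ) : Prop :=
  ∃ r ∈ rules, 1 ≤ α r.1 ∧ γ = applyRule α r

/-- The nodes of the Karp–Miller-style search tree from `α₀`: paths through
the complement of `F` in which no non-final node dominates-from-above an
earlier node (pruned nodes are leaves: a node with an ancestor below it is
kept but not expanded). -/
def KMTree (rules : Finset (Γ × (Γ → ℕ))) (F : Set (Γ → ℕ)) (α₀ : Γ → ℕ) :
    Set (List (Γ → ℕ)) :=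
  {l | l.head? = some α₀ ∧ List.Chain' (Step rules) l ∧
    (∀ β ∈ l, β ∉ F) ∧
    ∀ i j : ℕ, i < j → j + 1 < l.length →
      ∀ a b, l[i]? = some a → l[j]? = some b → ¬ a ≤ b}

/-! ### Auxiliary development -/

section Aux

/-- Execute a list of rules. -/
def execList (α : Γ → ℕ) : List (Γ × (Γ → ℕ)) → (Γ → ℕ)
  | [] => α
  | r :: rs => execList (applyRule α r) rs

/-- The list of configurations visited while executing a list of rules. -/
def runList (α : Γ → ℕ) : List (Γ × (Γ → ℕ)) → List (Γ → ℕ)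
  | [] => [α]
  | r :: rs => α :: runList (applyRule α r) rs

lemma runList_length (α : Γ → ℕ) : ∀ rs, (runList α rs).length = rs.length + 1 := by
  intro rs
  induction rs generalizing α with
  | nil => rfl
  | cons r rs ih => simp [runList, ih]

lemma runList_get? (α : Γ → ℕ) :
    ∀ (rs : List (Γ × (Γ → ℕ))) (i : ℕ), i ≤ rs.length →
      (runList α rs)[i]? = some (execList α (rs.take i)) := by
  intro rs
  induction rs generalizing α with
  | nil =>
    intro i hi
    have : i = 0 := Nat.le_zero.1 hi
    subst this
    rfl
  | cons r rs ih =>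
    intro i hi
    cases i with
    | zero => rfl
    | succ i =>
      simp only [runList, List.length_cons] at hi ⊢
      rw [List.getElem?_cons_succ, ih (applyRule α r) i (by omega)]
      rfl

lemma chain'_exists_runList (rules : Finset (Γ × (Γ → ℕ))) :
    ∀ (l : List (Γ → ℕ)) (α : Γ → ℕ), List.Chain' (Step rules) (α :: l) →
      ∃ rs, (∀ r ∈ rs, r ∈ rules) ∧ runList α rs = α :: l := by
  intro l
  induction l with
  | nil => exact fun α _ => ⟨[], by simp, rfl⟩
  | cons β l ih =>
    intro α hc
    simp only [List.Chain', List.isChain_cons_cons] at hc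
    obtain ⟨⟨r, hr, _, hβ⟩, hc'⟩ := hc
    obtain ⟨rs, hrs, hrun⟩ := ih β hc'
    refine ⟨r :: rs, ?_, ?_⟩
    · intro x hx
      rcases List.mem_cons.1 hx with h | h
      · exact h ▸ hr
      · exact hrs x h
    · simp only [runList, ← hβ, hrun]

/-- The one-step extension lemma for König's lemma. -/
lemma konig_step {R : Type*} (T : Set (List R)) (S : Finset R)
    (hmem : ∀ rs ∈ T, ∀ r ∈ rs, r ∈ S) (p : List R)
    (hp : {rs ∈ T | p <+: rs}.Infinite) :
    ∃ r, {rs ∈ T | p ++ [r] <+: rs}.Infinite := by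
  by_contra h
  push_neg at h
  have hsub : {rs ∈ T | p <+: rs} ⊆
      insert p (⋃ r ∈ S, {rs ∈ T | p ++ [r] <+: rs}) := by
    rintro rs ⟨hrsT, t, ht⟩
    rcases t with _ | ⟨r, t'⟩
    · simp at ht
      exact Set.mem_insert_iff.2 (Or.inl ht.symm)
    · refine Set.mem_insert_iff.2 (Or.inr ?_)
      have hrT : r ∈ S := hmem rs hrsT r (by rw [← ht]; simp)
      refine Set.mem_biUnion hrT ⟨hrsT, t', ?_⟩
      rw [← ht]; simp
  exact hp (Set.Finite.subset
    (Set.Finite.insert p (Set.Finite.biUnion S.finite_toSet fun r _ => h r)) hsub)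

/-- The branch built by König's lemma: a sequence of lists of every length,
each with infinitely many extensions in `T`. -/
noncomputable def konigSeq {R : Type*} (T : Set (List R)) (S : Finset R)
    (hmem : ∀ rs ∈ T, ∀ r ∈ rs, r ∈ S) (hT : T.Infinite) :
    (n : ℕ) → {p : List R // p.length = n ∧ {rs ∈ T | p <+: rs}.Infinite}
  | 0 => ⟨[], rfl, by simpa using hT⟩
  | n + 1 =>
    let q := konigSeq T S hmem hT n
    ⟨q.1 ++ [(konig_step T S hmem q.1 q.2.2).choose],
      by simp [q.2.1], (konig_step T S hmem q.1 q.2.2).choose_spec⟩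

lemma konigSeq_prefix {R : Type*} (T : Set (List R)) (S : Finset R)
    (hmem : ∀ rs ∈ T, ∀ r ∈ rs, r ∈ S) (hT : T.Infinite) :
    ∀ {i j : ℕ}, i ≤ j →
      (konigSeq T S hmem hT i).1 <+: (konigSeq T S hmem hT j).1 := by
  intro i j hij
  induction j with
  | zero => rw [Nat.le_zero.1 hij]
  | succ j ih =>
    rcases Nat.lt_or_ge i (j + 1) with h | h
    · exact (ih (by omega)).trans ⟨_, rfl⟩
    · rw [le_antisymm hij h]

/-- Dickson's lemma for `ℕ^Γ`. -/
lemma dickson_pair {Δ : Type*} [Finite Δ] (s : ℕ → (Δ → ℕ)) :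
    ∃ i j, i < j ∧ s i ≤ s j :=
  wellQuasiOrdered_le s

lemma applyRule_mono {α α' : Γ → ℕ} (h : α ≤ α') (r : Γ × (Γ → ℕ)) :
    applyRule α r ≤ applyRule α' r := fun Y => by
  dsimp [applyRule]
  exact Nat.add_le_add_right (Nat.sub_le_sub_right (h Y) _) _

/-- The shortest-path simulation lemma: anything reachable below from `u 0`
through `F̄` is reachable below, at least as fast, from any `t ≤ u 0`. -/
lemma sim (rules : Finset (Γ × (Γ → ℕ))) (F : Set (Γ → ℕ))
    (hF : ∀ α ∈ F, ∀ β, α ≤ β → β ∈ F) :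
    ∀ (n : ℕ) (u : ℕ → (Γ → ℕ)) (t : Γ → ℕ), t ≤ u 0 →
      (∀ i < n, Step rules (u i) (u (i + 1))) → (∀ i ≤ n, u i ∉ F) →
      ∃ m ≤ n, ∃ v : ℕ → (Γ → ℕ), v 0 = t ∧
        (∀ i < m, Step rules (v i) (v (i + 1))) ∧
        (∀ i ≤ m, v i ∉ F) ∧ v m ≤ u n := by
  intro n
  induction n with
  | zero =>
    intro u t ht _ huF
    refine ⟨0, le_rfl, fun _ => t, rfl, by omega, ?_, ht⟩
    intro i _
    exact fun htF => huF 0 le_rfl (hF t htF (u 0) ht)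
  | succ n ih =>
    intro u t ht hsteps huF
    obtain ⟨r, hr, hen, h1⟩ := hsteps 0 (Nat.succ_pos n)
    have htF : t ∉ F := fun htF => huF 0 (by omega) (hF t htF (u 0) ht)
    by_cases hc : 1 ≤ t r.1
    · have ht' : applyRule t r ≤ u 1 := h1 ▸ applyRule_mono ht r
      obtain ⟨m, hm, v, hv0, hvsteps, hvF, hvend⟩ :=
        ih (fun i => u (i + 1)) (applyRule t r) ht'
          (fun i hi => by simpa using hsteps (i + 1) (by omega))
          (fun i hi => huF (i + 1) (by omega))
      refine ⟨m + 1, by omega, fun i => if i = 0 then t else v (i - 1), rfl, ?_, ?_, ?_⟩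
      · intro i hi
        cases i with
        | zero =>
          simp only [if_pos rfl, if_neg (Nat.succ_ne_zero 0), Nat.add_sub_cancel, hv0]
          exact ⟨r, hr, hc, rfl⟩
        | succ i =>
          simp only [if_neg (Nat.succ_ne_zero i), if_neg (Nat.succ_ne_zero (i + 1)),
            Nat.add_sub_cancel]
          exact hvsteps i (by omega)
      · intro i hi
        cases i with
        | zero => simpa using htF
        | succ i =>
          simp only [if_neg (Nat.succ_ne_zero i), Nat.add_sub_cancel]
          exact hvF i (by omega)
      · simpa [Nat.succ_ne_zero] using hvend
    · have ht1 : t ≤ u 1 := by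
        intro Y
        rw [h1]
        dsimp [applyRule]
        by_cases hY : Y = r.1
        · rw [if_pos hY, hY]
          have h0 : t r.1 = 0 := by omega
          rw [h0]
          exact Nat.zero_le _
        · rw [if_neg hY]
          have h2 : t Y ≤ u 0 Y := ht Y
          omega
      obtain ⟨m, hm, v, hv⟩ :=
        ih (fun i => u (i + 1)) t ht1
          (fun i hi => by simpa using hsteps (i + 1) (by omega))
          (fun i hi => huF (i + 1) (by omega))
      exact ⟨m, by omega, v, hv⟩

end Aux

/-- The Karp–Miller-style search tree for coverability-from-below is finite,
and it contains a node ending in a configuration `≤ γ` iff there is a path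
from `α₀` through the complement of the upward-closed set `F` to a
configuration `≤ γ`. -/
theorem karp_miller_tree_finite_and_complete
    (rules : Finset (Γ × (Γ → ℕ))) (F : Set (Γ → ℕ))
    (hF : ∀ α ∈ F, ∀ β, α ≤ β → β ∈ F)
    (α₀ : Γ → ℕ) (hα₀ : α₀ ∉ F) (γ : Γ → ℕ) :
    (KMTree rules F α₀).Finite ∧
      ((∃ l ∈ KMTree rules F α₀, ∃ β, l.getLast? = some β ∧ β ≤ γ) ↔
        ∃ k, ∃ s : ℕ → (Γ → ℕ), s 0 = α₀ ∧
          (∀ i < k, Step rules (s i) (s (i + 1))) ∧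
          (∀ i ≤ k, s i ∉ F) ∧ s k ≤ γ) := by
  classical
  constructor
  · -- Finiteness
    set T : Set (List (Γ × (Γ → ℕ))) :=
      {rs | (∀ r ∈ rs, r ∈ rules) ∧ runList α₀ rs ∈ KMTree rules F α₀} with hT
    have hmem : ∀ rs ∈ T, ∀ r ∈ rs, r ∈ rules := fun rs h => h.1
    have hTfin : T.Finite := by
      by_contra hTinf'
      have hTinf : T.Infinite := hTinf'
      set q := konigSeq T rules hmem hTinf with hq
      set s : ℕ → (Γ → ℕ) := fun n => execList α₀ (q n).1 with hs
      obtain ⟨i, j, hij, hle⟩ := dickson_pair s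
      obtain ⟨rs, hrsT, hpre⟩ := (q (j + 1)).2.2.nonempty
      have hlen : ∀ n, (q n).1.length = n := fun n => (q n).2.1
      have htake : ∀ n, n ≤ j + 1 → rs.take n = (q n).1 := by
        intro n hn
        have h1 : (q n).1 <+: rs :=
          (konigSeq_prefix T rules hmem hTinf hn).trans hpre
        rw [List.prefix_iff_eq_take, hlen] at h1
        exact h1.symm
      have hjlen : j + 1 ≤ rs.length := by
        have := hpre.length_le
        rw [hlen] at this
        exact this
      have hKM := hrsT.2
      have hcond := hKM.2.2.2 i j hij
        (by rw [runList_length]; omega)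
        (s i) (s j)
        (by rw [runList_get? α₀ rs i (by omega), htake i (by omega)])
        (by rw [runList_get? α₀ rs j (by omega), htake j (by omega)])
      exact hcond hle
    have hsub : KMTree rules F α₀ ⊆ (runList α₀) '' T := by
      intro l hl
      have hhead := hl.1
      have hchain := hl.2.1
      obtain ⟨a, l', rfl⟩ : ∃ a l', l = a :: l' := by
        cases l with
        | nil => simp at hhead
        | cons a l' => exact ⟨a, l', rfl⟩
      have ha : a = α₀ := by simpa using hhead
      subst ha
      obtain ⟨rs, hrs, hrun⟩ := chain'_exists_runList rules l' a hchain
      exact ⟨rs, ⟨hrs, hrun ▸ hl⟩, hrun⟩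
    exact Set.Finite.subset (hTfin.image _) hsub
  · constructor
    · -- tree node gives a path
      rintro ⟨l, ⟨hhead, hchain, hnF, _⟩, β, hlast, hβγ⟩
      have hne : l ≠ [] := by rintro rfl; simp at hhead
      refine ⟨l.length - 1, fun i => (l[i]?).getD β, ?_, ?_, ?_, ?_⟩
      · show (l[0]?).getD β = α₀
        rw [← List.head?_eq_getElem?, hhead]
        rfl
      · intro i hi
        have h1 : i < l.length - 1 := hi
        show Step rules ((l[i]?).getD β) ((l[i + 1]?).getD β)
        rw [List.getElem?_eq_getElem (by omega : i < l.length),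
          List.getElem?_eq_getElem (by omega : i + 1 < l.length)]
        exact List.isChain_iff_getElem.1 hchain i (by omega)
      · intro i hi
        have hi' : i < l.length := by
          have : 1 ≤ l.length := List.length_pos_iff.2 hne
          omega
        show (l[i]?).getD β ∉ F
        rw [List.getElem?_eq_getElem hi']
        exact hnF _ (List.getElem_mem hi')
      · show (l[l.length - 1]?).getD β ≤ γ
        rw [← List.getLast?_eq_getElem?, hlast]
        exact hβγ
    · -- path gives a tree node (via a shortest path)
      rintro hP
      set P : ℕ → Prop := fun k => ∃ s : ℕ → (Γ → ℕ), s 0 = α₀ ∧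
          (∀ i < k, Step rules (s i) (s (i + 1))) ∧
          (∀ i ≤ k, s i ∉ F) ∧ s k ≤ γ with hPdef
      have hPex : ∃ k, P k := hP
      set k₀ := Nat.find hPex with hk₀
      obtain ⟨s, hs0, hsteps, hsF, hsγ⟩ := Nat.find_spec hPex
      set l : List (Γ → ℕ) := (List.range (k₀ + 1)).map s with hl
      have hlget : ∀ i ≤ k₀, l[i]? = some (s i) := by
        intro i hi
        rw [hl]
        rw [List.getElem?_map]
        rw [List.getElem?_range (by omega)]
        rfl
      have hllen : l.length = k₀ + 1 := by simp [hl]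
      refine ⟨l, ⟨?_, ?_, ?_, ?_⟩, s k₀, ?_, hsγ⟩
      · rw [List.head?_eq_getElem?, hlget 0 (by omega), hs0]
      · simp only [List.Chain', List.isChain_iff_getElem]
        intro i hi
        rw [hllen] at hi
        have h1 := hlget i (by omega)
        have h2 := hlget (i + 1) (by omega)
        rw [List.getElem?_eq_getElem (by omega)] at h1
        rw [List.getElem?_eq_getElem (by omega)] at h2
        rw [Option.some_inj] at h1 h2
        rw [h1, h2]
        exact hsteps i (by omega)
      · intro b hb
        rw [hl, List.mem_map] at hb
        obtain ⟨i, hi, rfl⟩ := hb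
        rw [List.mem_range] at hi
        exact hsF i (by omega)
      · -- the antichain property, by minimality of k₀
        intro i j hij hjlen a b ha hb
        rw [hllen] at hjlen
        have hjk : j < k₀ := by omega
        rw [hlget i (by omega), Option.some_inj] at ha
        rw [hlget j (by omega), Option.some_inj] at hb
        subst ha; subst hb
        intro hab
        -- build a strictly shorter witness
        obtain ⟨m, hm, v, hv0, hvsteps, hvF, hvend⟩ :=
          sim rules F hF (k₀ - j) (fun p => s (j + p)) (s i)
            (by simpa using hab)
            (fun p hp => by
              show Step rules (s (j + p)) (s (j + (p + 1)))
              have he : j + (p + 1) = j + p + 1 := by omega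
              rw [he]
              exact hsteps (j + p) (by omega))
            (fun p hp => hsF (j + p) (by omega))
        have hvend' : v m ≤ γ := by
          have hE : j + (k₀ - j) = k₀ := by omega
          have h2 : v m ≤ s k₀ := by
            have h := hvend
            simp only [hE] at h
            exact h
          exact h2.trans hsγ
        have hPk' : P (i + m) := by
          refine ⟨fun p => if p ≤ i then s p else v (p - i), ?_, ?_, ?_, ?_⟩
          · show (if 0 ≤ i then s 0 else v (0 - i)) = α₀
            rw [if_pos (Nat.zero_le i), hs0]
          · intro p hp
            show Step rules (if p ≤ i then s p else v (p - i))
              (if p + 1 ≤ i then s (p + 1) else v (p + 1 - i))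
            by_cases hpc : p + 1 ≤ i
            · rw [if_pos (by omega), if_pos hpc]
              exact hsteps p (by omega)
            · rw [if_neg hpc]
              have hveq : (if p ≤ i then s p else v (p - i)) = v (p - i) := by
                by_cases hpi : p ≤ i
                · have : p = i := by omega
                  subst this
                  rw [if_pos le_rfl, Nat.sub_self, hv0]
                · rw [if_neg hpi]
              rw [hveq]
              have : p + 1 - i = (p - i) + 1 := by omega
              rw [this]
              exact hvsteps (p - i) (by omega)
          · intro p hp
            show (if p ≤ i then s p else v (p - i)) ∉ F
            by_cases hpi : p ≤ i
            · rw [if_pos hpi]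
              exact hsF p (by omega)
            · rw [if_neg hpi]
              exact hvF (p - i) (by omega)
          · show (if i + m ≤ i then s (i + m) else v (i + m - i)) ≤ γ
            by_cases hmi : i + m ≤ i
            · have hm0 : m = 0 := by omega
              rw [if_pos hmi]
              have hsv : s (i + m) = v m := by rw [hm0, Nat.add_zero, ← hv0]
              rw [hsv]
              exact hvend'
            · rw [if_neg hmi, Nat.add_sub_cancel_left]
              exact hvend'
        have : i + m < k₀ := by omega
        exact Nat.find_min hPex this hPk'
      · rw [List.getLast?_eq_getElem?, hllen]
        simpa using hlget k₀ le_rfl
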